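/- Let A ∈ ℝ^{m×n}, let k be an integer with 1 ≤ k ≤ rank(A), and let λ_1 ≥ … ≥ λ_m ≥ 0 be the eigenvalues of A A^T in non-increasing order. Then ∑_{S ⊆ {1,…,m}, |S|=k} det(A_S A_S^T) · ‖A − π_S(A)‖_2 ≤ √((k+1)(n−k)·λ_{k+1}) · ∑_{S ⊆ {1,…,m}, |S|=k} det(A_S A_S^T). -/

import Mathlib

open Matrix BigOperators

noncomputable def projSpan {m n : ℕ} (A : Matrix (Fin m) (Fin n) ℝ) (S : Finset (Fin m)) :
    Matrix (Fin m) (Fin n) ℝ := fun i j =>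
  (Submodule.orthogonalProjectionOnto
      (Submodule.span ℝ (Set.range (fun s : S => (WithLp.equiv 2 (Fin n → ℝ)).symm (A s))))
      ((WithLp.equiv 2 (Fin n → ℝ)).symm (A i)) : EuclideanSpace ℝ (Fin n)) j

def rowSub {m n : ℕ} (A : Matrix (Fin m) (Fin n) ℝ) (S : Finset (Fin m)) :
    Matrix {x // x ∈ S} (Fin n) ℝ := fun i j => A i.1 j

noncomputable def gramDet {m n : ℕ} (A : Matrix (Fin m) (Fin n) ℝ) (S : Finset (Fin m)) : ℝ :=
  (rowSub A S * (rowSub A S)ᵀ).det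

noncomputable def frobSq {m n : ℕ} (M : Matrix (Fin m) (Fin n) ℝ) : ℝ :=
  ∑ i, ∑ j, (M i j)^2

noncomputable def specNorm {m n : ℕ} (M : Matrix (Fin m) (Fin n) ℝ) : ℝ :=
  ‖LinearMap.toContinuousLinearMap (Matrix.toEuclideanLin M)‖

open Finset Polynomial

section Aux
variable {ι R : Type*} [Fintype ι] [DecidableEq ι] [CommRing R]

theorem det_piecewise_one (s : Finset ι) (B : Matrix ι ι R) :
    (Matrix.of (s.piecewise (fun i => (1 : Matrix ι ι R) i) (fun i => B i))).det
      = (B.submatrix (fun i : {i // ¬ i ∈ s} => i.1) (fun i : {i // ¬ i ∈ s} => i.1)).det := by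
  classical
  let e := Equiv.sumCompl (· ∈ s)
  rw [← Matrix.det_submatrix_equiv_self e]
  have : (Matrix.of (s.piecewise (fun i => (1 : Matrix ι ι R) i) (fun i => B i))).submatrix e e
      = Matrix.fromBlocks 1 0
          (Matrix.of fun (i : {i // ¬ i ∈ s}) (j : {i // i ∈ s}) => B i.1 j.1)
          (B.submatrix (fun i : {i // ¬ i ∈ s} => i.1) (fun i : {i // ¬ i ∈ s} => i.1)) := by
    ext i j
    rcases i with i | i <;> rcases j with j | j <;>
      simp [e, Finset.piecewise, i.2, Matrix.one_apply] <;>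
      first
      | (intro h; exact absurd (h ▸ i.2) j.2)
      | simp [j.2]
  rw [this, Matrix.det_fromBlocks_zero₁₂, Matrix.det_one, one_mul]

theorem det_smul_one_add (x : R) (B : Matrix ι ι R) :
    (x • (1 : Matrix ι ι R) + B).det =
      ∑ s : Finset ι, x ^ s.card *
        (B.submatrix (fun i : {i // ¬ i ∈ s} => i.1) (fun i : {i // ¬ i ∈ s} => i.1)).det := by
  classical
  have h := (Matrix.detRowAlternating (R := R) (n := ι)).toMultilinearMap.map_add_univ
      (fun i => x • (1 : Matrix ι ι R) i) (fun i => B i)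
  have hM : (x • (1 : Matrix ι ι R) + B).det
      = AlternatingMap.toMultilinearMap (Matrix.detRowAlternating (R := R) (n := ι))
          ((fun i => x • (1 : Matrix ι ι R) i) + (fun i => B i)) := rfl
  rw [hM, h]
  refine Finset.sum_congr rfl fun s _ => ?_
  have hg : s.piecewise (fun i => x • (1 : Matrix ι ι R) i) (fun i => B i)
      = s.piecewise (fun i => x • (s.piecewise (fun i => (1 : Matrix ι ι R) i) (fun i => B i)) i)
          (s.piecewise (fun i => (1 : Matrix ι ι R) i) (fun i => B i)) := by
    ext i j
    by_cases hi : i ∈ s <;> simp [Finset.piecewise, hi]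
  rw [hg, (Matrix.detRowAlternating (R := R) (n := ι)).toMultilinearMap.map_piecewise_smul
      (fun _ => x) _ s]
  rw [Finset.prod_const, smul_eq_mul]
  congr 1
  exact det_piecewise_one s B

theorem charpoly_coeff_eq_minors (B : Matrix ι ι R) {j : ℕ} (hj : j ≤ Fintype.card ι) :
    B.charpoly.coeff (Fintype.card ι - j) =
      (-1) ^ j * ∑ s ∈ Finset.powersetCard j (Finset.univ : Finset ι),
        (B.submatrix (fun i : {i // i ∈ s} => i.1) (fun i : {i // i ∈ s} => i.1)).det := by
  classical
  have hch : charmatrix B = (Polynomial.X : R[X]) • (1 : Matrix ι ι R[X]) + (-(B.map C)) := by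
    ext i j
    by_cases h : i = j <;> simp [h, Matrix.one_apply, sub_eq_add_neg]
  rw [Matrix.charpoly, hch, det_smul_one_add, Polynomial.finset_sum_coeff]
  have hterm : ∀ s : Finset ι,
      ((Polynomial.X : R[X]) ^ s.card *
        ((-(B.map C)).submatrix (fun i : {i // ¬ i ∈ s} => i.1) (fun i : {i // ¬ i ∈ s} => i.1)).det).coeff
          (Fintype.card ι - j)
      = if s.card = Fintype.card ι - j then
          (-1) ^ j *
            (B.submatrix (fun i : {i // ¬ i ∈ s} => i.1) (fun i : {i // ¬ i ∈ s} => i.1)).det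
        else 0 := by
    intro s
    have hcard : Fintype.card {i // ¬ i ∈ s} = Fintype.card ι - s.card := by
      simp [Fintype.card_subtype_compl]
    have h1 : ((-(B.map C)).submatrix (fun i : {i // ¬ i ∈ s} => i.1)
        (fun i : {i // ¬ i ∈ s} => i.1)).det
        = (-1 : R[X]) ^ (Fintype.card ι - s.card) *
          C ((B.submatrix (fun i : {i // ¬ i ∈ s} => i.1) (fun i : {i // ¬ i ∈ s} => i.1)).det) := by
      have hneg : ((-(B.map C)).submatrix (fun i : {i // ¬ i ∈ s} => i.1)
          (fun i : {i // ¬ i ∈ s} => i.1))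
          = -((B.map C).submatrix (fun i : {i // ¬ i ∈ s} => i.1)
              (fun i : {i // ¬ i ∈ s} => i.1)) := rfl
      rw [hneg, Matrix.det_neg, hcard, Matrix.submatrix_map, ← RingHom.mapMatrix_apply, ← RingHom.map_det]
    rw [h1]
    have : (-1 : R[X]) ^ (Fintype.card ι - s.card) *
          C ((B.submatrix (fun i : {i // ¬ i ∈ s} => i.1) (fun i : {i // ¬ i ∈ s} => i.1)).det)
        = C ((-1) ^ (Fintype.card ι - s.card) *
            (B.submatrix (fun i : {i // ¬ i ∈ s} => i.1) (fun i : {i // ¬ i ∈ s} => i.1)).det) := by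
      simp
    rw [this, mul_comm, Polynomial.coeff_C_mul, Polynomial.coeff_X_pow]
    by_cases h : s.card = Fintype.card ι - j
    · have h2 : Fintype.card ι - (Fintype.card ι - j) = j := by omega
      simp [h, h2]
    · have h' : ¬(Fintype.card ι - j = s.card) := fun hh => h hh.symm
      simp [h, h']
  rw [Finset.sum_congr rfl (fun s _ => hterm s), Finset.sum_ite, Finset.sum_const_zero, add_zero]
  rw [Finset.mul_sum]
  refine Finset.sum_bij' (fun s _ => sᶜ) (fun t _ => tᶜ) ?_ ?_ ?_ ?_ ?_
  · intro s hs
    simp only [Finset.mem_filter, Finset.mem_univ, true_and] at hs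
    simp only [Finset.mem_powersetCard_univ, Finset.card_compl]
    omega
  · intro t ht
    simp only [Finset.mem_powersetCard_univ] at ht
    simp only [Finset.mem_filter, Finset.mem_univ, true_and, Finset.card_compl]
    omega
  · intro s _; simp
  · intro t _; simp
  · intro s hs
    let e : {i // i ∈ sᶜ} ≃ {i // ¬ i ∈ s} :=
      Equiv.subtypeEquivRight (fun i => Finset.mem_compl)
    have : (B.submatrix (fun i : {i // i ∈ sᶜ} => i.1) (fun i : {i // i ∈ sᶜ} => i.1))
        = (B.submatrix (fun i : {i // ¬ i ∈ s} => i.1)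
            (fun i : {i // ¬ i ∈ s} => i.1)).submatrix e e := by
      ext i j; rfl
    rw [this, Matrix.det_submatrix_equiv_self]

end Aux

theorem esymm_step {m n k : ℕ} (lam : Fin m → ℝ) (hmono : Antitone lam)
    (hnn : ∀ i, 0 ≤ lam i) (hkm : k < m)
    (hr : #(univ.filter (fun i => lam i ≠ 0)) ≤ n) :
    ∑ T ∈ Finset.powersetCard (k+1) (univ : Finset (Fin m)), ∏ i ∈ T, lam i
      ≤ ((n - k : ℕ) : ℝ) * lam ⟨k, hkm⟩ *
        ∑ S ∈ Finset.powersetCard k (univ : Finset (Fin m)), ∏ i ∈ S, lam i := by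
  classical
  set F : Finset (Fin m) := univ.filter (fun i => lam i ≠ 0) with hF
  set lk : ℝ := lam ⟨k, hkm⟩ with hlk
  have hlk0 : 0 ≤ lk := hnn _
  set G : Finset (Finset (Fin m)) :=
    (Finset.powersetCard (k+1) (univ : Finset (Fin m))).filter (· ⊆ F) with hG
  set Mx : Finset (Fin m) → Fin m := fun T => WithBot.unbotD ⟨k, hkm⟩ T.max with hMx
  set φ : Finset (Fin m) → Finset (Fin m) := fun T => T.erase (Mx T) with hφ
  have hGprop : ∀ T ∈ G, T.card = k + 1 ∧ T ⊆ F := by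
    intro T hT
    simp only [hG, mem_filter, mem_powersetCard_univ] at hT
    exact hT
  have hMxmem : ∀ T : Finset (Fin m), T.Nonempty → Mx T ∈ T ∧ ∀ b ∈ T, b ≤ Mx T := by
    intro T hne
    obtain ⟨a, ha⟩ := Finset.max_of_nonempty hne
    have : Mx T = a := by simp [hMx, ha]
    rw [this]
    exact ⟨Finset.mem_of_max ha, fun b hb => Finset.le_max_of_eq hb ha⟩
  have hTne : ∀ T ∈ G, T.Nonempty := fun T hT =>
    Finset.card_pos.mp (by rw [(hGprop T hT).1]; omega)
  have hprodnn : ∀ S : Finset (Fin m), 0 ≤ ∏ i ∈ S, lam i :=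
    fun S => Finset.prod_nonneg fun i _ => hnn i
  -- Step 1
  have step1 : ∑ T ∈ Finset.powersetCard (k+1) (univ : Finset (Fin m)), ∏ i ∈ T, lam i
      ≤ ∑ T ∈ G, lk * ∏ i ∈ φ T, lam i := by
    rw [← Finset.sum_filter_add_sum_filter_not
      (Finset.powersetCard (k+1) (univ : Finset (Fin m))) (· ⊆ F)]
    have h2 : ∑ T ∈ (Finset.powersetCard (k+1) (univ : Finset (Fin m))).filter
        (fun T => ¬ T ⊆ F), ∏ i ∈ T, lam i = 0 := by
      refine Finset.sum_eq_zero fun T hT => ?_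
      simp only [mem_filter, Finset.not_subset] at hT
      obtain ⟨i, hiT, hiF⟩ := hT.2
      refine Finset.prod_eq_zero hiT ?_
      by_contra h
      exact hiF (by simp [hF, h])
    rw [h2, add_zero]
    refine Finset.sum_le_sum fun T hT => ?_
    have hne := hTne T hT
    obtain ⟨hmem, hmax⟩ := hMxmem T hne
    have hsplit : ∏ i ∈ T, lam i = lam (Mx T) * ∏ i ∈ φ T, lam i :=
      (Finset.mul_prod_erase T lam hmem).symm
    rw [hsplit]
    refine mul_le_mul_of_nonneg_right ?_ (hprodnn _)
    refine hmono ?_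
    -- ⟨k, hkm⟩ ≤ Mx T, i.e. k ≤ (Mx T).val
    have hsub : T ⊆ Finset.Iic (Mx T) := fun b hb => Finset.mem_Iic.mpr (hmax b hb)
    have hcard := Finset.card_le_card hsub
    rw [(hGprop T hT).1, Fin.card_Iic] at hcard
    exact Fin.mk_le_of_le_val (by omega)
  -- Step 2
  have hmaps : ∀ T ∈ G, φ T ∈ Finset.powersetCard k (univ : Finset (Fin m)) := by
    intro T hT
    rw [Finset.mem_powersetCard_univ, hφ]
    rw [Finset.card_erase_of_mem (hMxmem T (hTne T hT)).1, (hGprop T hT).1]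
    omega
  have hfiber : ∀ S ∈ Finset.powersetCard k (univ : Finset (Fin m)),
      #(G.filter (fun T => φ T = S)) ≤ n - k := by
    intro S hS
    rw [Finset.mem_powersetCard_univ] at hS
    by_cases hSF : S ⊆ F
    · have hinj : #(G.filter (fun T => φ T = S)) ≤ #(F \ S) := by
        refine Finset.card_le_card_of_injOn Mx ?_ ?_
        · intro T hT
          simp only [Finset.coe_filter, Set.mem_setOf_eq, mem_filter, Finset.mem_coe] at hT
          obtain ⟨hTG, hTS⟩ := hT
          have hmem := (hMxmem T (hTne T hTG)).1
          refine Finset.mem_sdiff.mpr ⟨(hGprop T hTG).2 hmem, ?_⟩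
          rw [← hTS]
          exact Finset.notMem_erase _ _
        · intro T1 h1 T2 h2 heq
          simp only [Finset.coe_filter, Set.mem_setOf_eq] at h1 h2
          have e1 : T1 = insert (Mx T1) (φ T1) :=
            (Finset.insert_erase (hMxmem T1 (hTne T1 h1.1)).1).symm
          have e2 : T2 = insert (Mx T2) (φ T2) :=
            (Finset.insert_erase (hMxmem T2 (hTne T2 h2.1)).1).symm
          rw [e1, e2, h1.2, h2.2, heq]
      have : #(F \ S) = #F - k := by
        rw [Finset.card_sdiff_of_subset hSF, hS]
      omega
    · have : G.filter (fun T => φ T = S) = ∅ := by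
        refine Finset.filter_eq_empty_iff.mpr fun {T} hT hTS => ?_
        exact hSF (hTS ▸ (Finset.erase_subset _ _).trans (hGprop T hT).2)
      rw [this]
      simp
  have step2 : ∑ T ∈ G, ∏ i ∈ φ T, lam i
      ≤ ((n - k : ℕ) : ℝ) * ∑ S ∈ Finset.powersetCard k (univ : Finset (Fin m)),
          ∏ i ∈ S, lam i := by
    rw [← Finset.sum_fiberwise_of_maps_to hmaps (fun T => ∏ i ∈ T.erase (Mx T), lam i)]
    rw [Finset.mul_sum]
    refine Finset.sum_le_sum fun S hS => ?_
    have : ∀ T ∈ G.filter (fun T => φ T = S), ∏ i ∈ T.erase (Mx T), lam i = ∏ i ∈ S, lam i := by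
      intro T hT
      simp only [mem_filter] at hT
      rw [← hT.2]
    rw [Finset.sum_congr rfl this, Finset.sum_const, nsmul_eq_mul]
    refine mul_le_mul_of_nonneg_right ?_ (hprodnn S)
    exact_mod_cast hfiber S hS
  calc ∑ T ∈ Finset.powersetCard (k+1) (univ : Finset (Fin m)), ∏ i ∈ T, lam i
      ≤ ∑ T ∈ G, lk * ∏ i ∈ φ T, lam i := step1
    _ = lk * ∑ T ∈ G, ∏ i ∈ φ T, lam i := by rw [Finset.mul_sum]
    _ ≤ lk * (((n - k : ℕ) : ℝ) * ∑ S ∈ Finset.powersetCard k (univ : Finset (Fin m)),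
          ∏ i ∈ S, lam i) := mul_le_mul_of_nonneg_left step2 hlk0
    _ = ((n - k : ℕ) : ℝ) * lk * ∑ S ∈ Finset.powersetCard k (univ : Finset (Fin m)),
          ∏ i ∈ S, lam i := by ring

theorem gram_det_option {E : Type*} [NormedAddCommGroup E] [InnerProductSpace ℝ E]
    [FiniteDimensional ℝ E] {ι : Type*} [Fintype ι] [DecidableEq ι] (v : ι → E) (w : E) :
    (Matrix.of fun a b : Option ι =>
        (inner ℝ (a.elim w v) (b.elim w v) : ℝ)).det
      = (Matrix.of fun a b : ι => (inner ℝ (v a) (v b) : ℝ)).det *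
        ‖w - (Submodule.orthogonalProjectionOnto (Submodule.span ℝ (Set.range v)) w : E)‖ ^ 2 := by
  classical
  set W := Submodule.span ℝ (Set.range v) with hW
  set p : E := (Submodule.orthogonalProjectionOnto W w : E) with hp
  set r : E := w - p with hr
  have hpW : p ∈ W := (Submodule.orthogonalProjectionOnto W w).2
  have hrW : ∀ u ∈ W, inner ℝ r u = (0 : ℝ) := fun u hu =>
    (Submodule.mem_orthogonal' W r).mp (Submodule.sub_starProjection_mem_orthogonal (K := W) w) u hu
  have hvW : ∀ a : ι, v a ∈ W := fun a => Submodule.subset_span (Set.mem_range_self a)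
  set V : Option ι → E := fun a => a.elim w v with hV
  set N : Matrix (Option ι) (Option ι) ℝ :=
    Matrix.of fun a b => (inner ℝ (V a) (V b) : ℝ) with hN
  obtain ⟨c, hc⟩ := (Submodule.mem_span_range_iff_exists_fun ℝ).mp hpW
  set c' : Option ι → ℝ := fun a => a.elim 0 c with hc'
  have hwpr : w = p + r := by rw [hr]; abel
  -- decompose the `none` row
  have hNeq : N = N.updateRow none
      ((fun b => (inner ℝ p (V b) : ℝ)) + fun b => (inner ℝ r (V b) : ℝ)) := by
    ext a b
    rcases a with _ | a
    · rw [Matrix.updateRow_self]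
      simp only [Pi.add_apply, hN, Matrix.of_apply]
      rw [show V none = w from rfl, hwpr, inner_add_left]
    · rw [Matrix.updateRow_ne (by simp)]
  have hrowsplit : N.det = (N.updateRow none (fun b => (inner ℝ p (V b) : ℝ))).det
      + (N.updateRow none (fun b => (inner ℝ r (V b) : ℝ))).det := by
    conv_lhs => rw [hNeq]
    rw [Matrix.det_updateRow_add]
  -- the `p` part vanishes
  have hp0 : (N.updateRow none (fun b => (inner ℝ p (V b) : ℝ))).det = 0 := by
    have hrow : (fun b => (inner ℝ p (V b) : ℝ)) = ∑ k, c' k • N k := by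
      funext b
      have h1 : (∑ k, c' k • N k) b = ∑ k : Option ι, c' k * N k b := by
        simp [Finset.sum_apply]
      rw [h1, Fintype.sum_option]
      have h2 : c' none = 0 := rfl
      rw [h2, zero_mul, zero_add, ← hc, sum_inner]
      refine Finset.sum_congr rfl fun x _ => ?_
      rw [real_inner_smul_left]
      rfl
    rw [hrow, Matrix.det_updateRow_sum]
    simp [hc']
  -- the `r` part
  have hrrow : (fun b => (inner ℝ r (V b) : ℝ))
      = (‖r‖ ^ 2) • (Pi.single none 1 : Option ι → ℝ) := by
    funext b
    match b with
    | none =>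
      simp only [Pi.smul_apply, Pi.single_eq_same, smul_eq_mul, mul_one]
      rw [show V none = w from rfl, hwpr, inner_add_right, hrW p hpW,
        real_inner_self_eq_norm_sq]
      ring
    | some a =>
      have h1 : (inner ℝ r (V (some a)) : ℝ) = 0 := by
        rw [show V (some a) = v a from rfl, hrW (v a) (hvW a)]
      rw [h1]
      simp [Pi.single_eq_of_ne (Option.some_ne_none a)]
  have hr2 : (N.updateRow none (fun b => (inner ℝ r (V b) : ℝ))).det
      = ‖r‖ ^ 2 * (N.updateRow none (Pi.single none 1 : Option ι → ℝ)).det := by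
    rw [hrrow, Matrix.det_updateRow_smul]
  -- identify the remaining determinant with the Gram det of `v`
  have hpiece : N.updateRow none (Pi.single none 1 : Option ι → ℝ)
      = Matrix.of (({none} : Finset (Option ι)).piecewise
          (fun i => (1 : Matrix (Option ι) (Option ι) ℝ) i)
          (fun i => (N.updateRow none (Pi.single none 1 : Option ι → ℝ)) i)) := by
    funext a b
    by_cases h : a = none
    · subst h
      simp [Finset.piecewise, Matrix.one_apply, Pi.single_apply, eq_comm]
    · simp [Finset.piecewise, h, Matrix.updateRow_ne h]
  have hsome : ∀ x : {x : Option ι // ¬ x ∈ ({none} : Finset (Option ι))}, x.1.isSome := by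
    rintro ⟨x, hx⟩
    cases x with
    | none => simp at hx
    | some a => rfl
  let e : {x : Option ι // ¬ x ∈ ({none} : Finset (Option ι))} ≃ ι :=
    { toFun := fun x => x.1.get (hsome x)
      invFun := fun a => ⟨some a, by simp⟩
      left_inv := by rintro ⟨x, hx⟩; cases x with
        | none => simp at hx
        | some a => rfl
      right_inv := fun a => rfl }
  have hsub : ((N.updateRow none (Pi.single none 1 : Option ι → ℝ)).submatrix
        (fun i : {i // ¬ i ∈ ({none} : Finset (Option ι))} => i.1)
        (fun i : {i // ¬ i ∈ ({none} : Finset (Option ι))} => i.1))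
      = (Matrix.of fun a b : ι => (inner ℝ (v a) (v b) : ℝ)).submatrix e e := by
    ext x y
    have hx : x.1 = some (e x) := (Option.some_get (hsome x)).symm
    have hy : y.1 = some (e y) := (Option.some_get (hsome y)).symm
    simp only [Matrix.submatrix_apply, Matrix.of_apply]
    rw [Matrix.updateRow_ne (by simp [hx]), hx, hy]
    rfl
  rw [hrowsplit, hp0, zero_add, hr2, hpiece, det_piecewise_one, hsub,
    Matrix.det_submatrix_equiv_self]
  ring

section Bridge
variable {m n : ℕ} (A : Matrix (Fin m) (Fin n) ℝ)

noncomputable def vA : Fin m → EuclideanSpace ℝ (Fin n) :=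
  fun i => (WithLp.equiv 2 (Fin n → ℝ)).symm (A i)

noncomputable def dsq (S : Finset (Fin m)) (i : Fin m) : ℝ :=
  ‖vA A i - (Submodule.orthogonalProjectionOnto
      (Submodule.span ℝ (Set.range (fun s : S => (WithLp.equiv 2 (Fin n → ℝ)).symm (A s))))
      (vA A i) : EuclideanSpace ℝ (Fin n))‖ ^ 2

theorem gramDet_eq_gram (S : Finset (Fin m)) :
    gramDet A S = (Matrix.of fun a b : {x // x ∈ S} =>
      (inner ℝ (vA A a.1) (vA A b.1) : ℝ)).det := by
  have h : rowSub A S * (rowSub A S)ᵀ = Matrix.of fun a b : {x // x ∈ S} =>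
      (inner ℝ (vA A a.1) (vA A b.1) : ℝ) := by
    ext a b
    simp [rowSub, Matrix.mul_apply, vA, PiLp.inner_apply, RCLike.inner_apply,
      WithLp.equiv_symm_apply, PiLp.toLp_apply, mul_comm]
  rw [gramDet, h]

theorem gramDet_insert (S : Finset (Fin m)) (i : Fin m) (hi : i ∉ S) :
    gramDet A (insert i S) = gramDet A S * dsq A S i := by
  classical
  rw [gramDet_eq_gram, gramDet_eq_gram]
  have key := gram_det_option (fun a : {x // x ∈ S} => vA A a.1) (vA A i)
  set e2 : Option {x // x ∈ S} ≃ {x // x ∈ insert i S} :=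
    { toFun := fun o => o.elim ⟨i, Finset.mem_insert_self i S⟩
        (fun a => ⟨a.1, Finset.mem_insert_of_mem a.2⟩)
      invFun := fun x => if h : x.1 ∈ S then some ⟨x.1, h⟩ else none
      left_inv := by
        rintro (_ | a)
        · simp [hi]
        · simp [a.2]
      right_inv := by
        rintro ⟨x, hx⟩
        by_cases h : x ∈ S
        · simp [h]
        · have : x = i := by
            rcases Finset.mem_insert.mp hx with h' | h'
            · exact h'
            · exact absurd h' h
          subst this
          simp [h] } with he2
  have hmat : (Matrix.of fun a b : {x // x ∈ insert i S} =>
      (inner ℝ (vA A a.1) (vA A b.1) : ℝ))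
      = (Matrix.of fun a b : Option {x // x ∈ S} =>
          (inner ℝ (a.elim (vA A i) (fun a : {x // x ∈ S} => vA A a.1))
            (b.elim (vA A i) (fun a : {x // x ∈ S} => vA A a.1)) : ℝ)).submatrix
          e2.symm e2.symm := by
    ext a b
    simp only [Matrix.submatrix_apply, Matrix.of_apply]
    congr 1
    · rcases h : e2.symm a with _ | y
      · have := congrArg (fun o => (e2 o).1) h
        simp only [Equiv.apply_symm_apply] at this
        rw [this]; rfl
      · have := congrArg (fun o => (e2 o).1) h
        simp only [Equiv.apply_symm_apply] at this
        rw [this]; rfl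
    · rcases h : e2.symm b with _ | y
      · have := congrArg (fun o => (e2 o).1) h
        simp only [Equiv.apply_symm_apply] at this
        rw [this]; rfl
      · have := congrArg (fun o => (e2 o).1) h
        simp only [Equiv.apply_symm_apply] at this
        rw [this]; rfl
  rw [hmat, Matrix.det_submatrix_equiv_self, key]
  rfl

theorem dsq_mem (S : Finset (Fin m)) (i : Fin m) (hi : i ∈ S) : dsq A S i = 0 := by
  unfold dsq
  have hmem : vA A i ∈ Submodule.span ℝ
      (Set.range (fun s : S => (WithLp.equiv 2 (Fin n → ℝ)).symm (A s))) := by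
    refine Submodule.subset_span ⟨⟨i, hi⟩, rfl⟩
  rw [Submodule.coe_orthogonalProjectionOnto_apply, Submodule.starProjection_eq_self_iff.mpr hmem]
  simp

theorem frobSq_eq_sum_dsq (S : Finset (Fin m)) :
    frobSq (A - projSpan A S) = ∑ i, dsq A S i := by
  unfold frobSq
  refine Finset.sum_congr rfl fun i _ => ?_
  have hnorm : ∀ x : EuclideanSpace ℝ (Fin n), ‖x‖ ^ 2 = ∑ j, (x j) ^ 2 := by
    intro x
    rw [EuclideanSpace.norm_eq, Real.sq_sqrt (by positivity)]
    refine Finset.sum_congr rfl fun j _ => ?_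
    rw [Real.norm_eq_abs, sq_abs]
  rw [dsq, hnorm]
  refine Finset.sum_congr rfl fun j _ => ?_
  congr 1

theorem specNorm_le_sqrt_frobSq (M : Matrix (Fin m) (Fin n) ℝ) :
    specNorm M ≤ Real.sqrt (frobSq M) := by
  refine ContinuousLinearMap.opNorm_le_bound _ (Real.sqrt_nonneg _) fun x => ?_
  have happ : ∀ i, (LinearMap.toContinuousLinearMap (Matrix.toEuclideanLin M)) x i
      = ∑ j, M i j * x j := by
    intro i
    rw [LinearMap.coe_toContinuousLinearMap', Matrix.toEuclideanLin_apply]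
    simp [WithLp.equiv_symm_apply, PiLp.toLp_apply, Matrix.mulVec, dotProduct]
  have hxnorm : ‖x‖ = Real.sqrt (∑ j, (x j) ^ 2) := by
    rw [EuclideanSpace.norm_eq]
    congr 1
    refine Finset.sum_congr rfl fun j _ => ?_
    rw [Real.norm_eq_abs, sq_abs]
  have hTx : ‖(LinearMap.toContinuousLinearMap (Matrix.toEuclideanLin M)) x‖
      = Real.sqrt (∑ i, (∑ j, M i j * x j) ^ 2) := by
    rw [EuclideanSpace.norm_eq]
    congr 1
    refine Finset.sum_congr rfl fun i _ => ?_
    rw [Real.norm_eq_abs, sq_abs, happ]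
  have hF : 0 ≤ frobSq M := by
    unfold frobSq; positivity
  rw [hTx, hxnorm]
  rw [← Real.sqrt_mul hF]
  refine Real.sqrt_le_sqrt ?_
  have hCS : ∀ i, (∑ j, M i j * x j) ^ 2 ≤ (∑ j, (M i j) ^ 2) * ∑ j, (x j) ^ 2 :=
    fun i => Finset.sum_mul_sq_le_sq_mul_sq _ _ _
  calc ∑ i, (∑ j, M i j * x j) ^ 2
      ≤ ∑ i, (∑ j, (M i j) ^ 2) * ∑ j, (x j) ^ 2 := Finset.sum_le_sum fun i _ => hCS i
    _ = frobSq M * ∑ j, (x j) ^ 2 := by rw [frobSq, Finset.sum_mul]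

theorem exchange (k : ℕ) :
    ∑ S ∈ Finset.powersetCard k (univ : Finset (Fin m)),
        gramDet A S * frobSq (A - projSpan A S)
      = ((k : ℝ) + 1) * ∑ T ∈ Finset.powersetCard (k+1) (univ : Finset (Fin m)),
          gramDet A T := by
  classical
  have h1 : ∀ S ∈ Finset.powersetCard k (univ : Finset (Fin m)),
      gramDet A S * frobSq (A - projSpan A S)
        = ∑ i ∈ Sᶜ, gramDet A (insert i S) := by
    intro S _
    rw [frobSq_eq_sum_dsq, Finset.mul_sum]
    rw [← Finset.sum_add_sum_compl S (fun i => gramDet A S * dsq A S i)]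
    have hz : ∑ i ∈ S, gramDet A S * dsq A S i = 0 :=
      Finset.sum_eq_zero fun i hi => by rw [dsq_mem A S i hi, mul_zero]
    rw [hz, zero_add]
    refine Finset.sum_congr rfl fun i hi => ?_
    rw [← gramDet_insert A S i (Finset.mem_compl.mp hi)]
  rw [Finset.sum_congr rfl h1]
  have e1 : ∑ S ∈ Finset.powersetCard k (univ : Finset (Fin m)), ∑ i ∈ Sᶜ,
        gramDet A (insert i S)
      = ∑ x ∈ (Finset.powersetCard k (univ : Finset (Fin m))).sigma (fun S => Sᶜ),
          gramDet A (insert x.2 x.1) := Finset.sum_sigma' _ _ _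
  have e2 : ∑ T ∈ Finset.powersetCard (k+1) (univ : Finset (Fin m)), ∑ _i ∈ T, gramDet A T
      = ∑ x ∈ (Finset.powersetCard (k+1) (univ : Finset (Fin m))).sigma (fun T => T),
          gramDet A x.1 := Finset.sum_sigma' _ _ _
  have e3 : ∑ T ∈ Finset.powersetCard (k+1) (univ : Finset (Fin m)), ∑ _i ∈ T, gramDet A T
      = ((k : ℝ) + 1) * ∑ T ∈ Finset.powersetCard (k+1) (univ : Finset (Fin m)),
          gramDet A T := by
    rw [Finset.mul_sum]
    refine Finset.sum_congr rfl fun T hT => ?_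
    rw [Finset.sum_const, nsmul_eq_mul, Finset.mem_powersetCard_univ.mp hT]
    push_cast
    ring
  rw [e1, e3.symm.trans e2]
  refine Finset.sum_nbij' (fun x => ⟨insert x.2 x.1, x.2⟩) (fun x => ⟨x.1.erase x.2, x.2⟩)
    ?_ ?_ ?_ ?_ ?_
  · rintro ⟨S, i⟩ hx
    simp only [Finset.mem_sigma, Finset.mem_powersetCard_univ, Finset.mem_compl] at hx ⊢
    exact ⟨by rw [Finset.card_insert_of_notMem hx.2, hx.1], Finset.mem_insert_self _ _⟩
  · rintro ⟨T, i⟩ hx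
    simp only [Finset.mem_sigma, Finset.mem_powersetCard_univ, Finset.mem_compl] at hx ⊢
    refine ⟨by rw [Finset.card_erase_of_mem hx.2, hx.1]; omega, Finset.notMem_erase _ _⟩
  · rintro ⟨S, i⟩ hx
    simp only [Finset.mem_sigma, Finset.mem_powersetCard_univ, Finset.mem_compl] at hx
    simp [Finset.erase_insert hx.2]
  · rintro ⟨T, i⟩ hx
    simp only [Finset.mem_sigma, Finset.mem_powersetCard_univ, Finset.mem_compl] at hx
    simp [Finset.insert_erase hx.2]
  · rintro ⟨S, i⟩ hx
    rfl
end Bridge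

theorem gramDet_eq_minor {m n : ℕ} (A : Matrix (Fin m) (Fin n) ℝ) (S : Finset (Fin m)) :
    gramDet A S = ((A * Aᵀ).submatrix (fun i : {x // x ∈ S} => i.1)
      (fun i : {x // x ∈ S} => i.1)).det := by
  have h : rowSub A S * (rowSub A S)ᵀ = (A * Aᵀ).submatrix
      (fun i : {x // x ∈ S} => i.1) (fun i : {x // x ∈ S} => i.1) := by
    ext a b
    simp [rowSub, Matrix.mul_apply]
  rw [gramDet, h]

theorem psd_det_nonneg {ι : Type*} [Fintype ι] [DecidableEq ι] {M : Matrix ι ι ℝ}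
    (h : M.PosSemidef) : 0 ≤ M.det := by
  rw [h.isHermitian.det_eq_prod_eigenvalues]
  refine Finset.prod_nonneg fun i _ => ?_
  simpa using h.eigenvalues_nonneg i

theorem AAT_posSemidef {m n : ℕ} (A : Matrix (Fin m) (Fin n) ℝ) : (A * Aᵀ).PosSemidef := by
  have := Matrix.posSemidef_self_mul_conjTranspose A
  simpa using this

theorem gramDet_nonneg {m n : ℕ} (A : Matrix (Fin m) (Fin n) ℝ) (S : Finset (Fin m)) :
    0 ≤ gramDet A S := by
  rw [gramDet_eq_minor]
  exact psd_det_nonneg ((AAT_posSemidef A).submatrix _)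

theorem sum_gram_eq_esymm {m n : ℕ} (A : Matrix (Fin m) (Fin n) ℝ) (lam : Fin m → ℝ)
    (hlam : (A * Aᵀ).charpoly = ∏ i, (Polynomial.X - Polynomial.C (lam i)))
    {j : ℕ} (hj : j ≤ m) :
    ∑ S ∈ Finset.powersetCard j (univ : Finset (Fin m)), gramDet A S
      = ∑ T ∈ Finset.powersetCard j (univ : Finset (Fin m)), ∏ i ∈ T, lam i := by
  classical
  have hcard : Fintype.card (Fin m) = m := Fintype.card_fin m
  have h1 := charpoly_coeff_eq_minors (A * Aᵀ) (j := j) (by rw [hcard]; exact hj)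
  rw [hcard, hlam] at h1
  -- Vieta
  have hprod : (∏ i : Fin m, (X - Polynomial.C (lam i)))
      = (Multiset.map (fun t => X - Polynomial.C t)
          (Multiset.map lam (univ : Finset (Fin m)).val)).prod := by
    rw [Multiset.map_map]
    rfl
  have hc2 : Multiset.card (Multiset.map lam (univ : Finset (Fin m)).val) = m := by
    simp
  have h2 : (∏ i : Fin m, (X - Polynomial.C (lam i))).coeff (m - j)
      = (-1 : ℝ) ^ j * ∑ T ∈ Finset.powersetCard j (univ : Finset (Fin m)),
          ∏ i ∈ T, lam i := by
    rw [hprod, Multiset.prod_X_sub_C_coeff _ (by rw [hc2]; omega)]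
    rw [hc2]
    have hjj : m - (m - j) = j := by omega
    rw [hjj, Finset.esymm_map_val]
  rw [h2] at h1
  have := mul_left_cancel₀ (a := (-1 : ℝ) ^ j) (pow_ne_zero _ (by norm_num)) h1.symm
  rw [← this]
  refine Finset.sum_congr rfl fun S _ => (gramDet_eq_minor A S).symm

theorem support_card_le_rank {m n : ℕ} (A : Matrix (Fin m) (Fin n) ℝ) (lam : Fin m → ℝ)
    (hnn : ∀ i, 0 ≤ lam i)
    (hlam : (A * Aᵀ).charpoly = ∏ i, (Polynomial.X - Polynomial.C (lam i))) :
    #(univ.filter (fun i => lam i ≠ 0)) ≤ A.rank := by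
  classical
  set F := univ.filter (fun i => lam i ≠ 0) with hF
  set r' := #F with hr'
  have hr'm : r' ≤ m := by
    calc r' ≤ #(univ : Finset (Fin m)) := Finset.card_filter_le _ _
      _ = m := by simp
  have hFmem : F ∈ Finset.powersetCard r' (univ : Finset (Fin m)) :=
    Finset.mem_powersetCard_univ.mpr rfl
  have hFpos : 0 < ∏ i ∈ F, lam i := by
    refine Finset.prod_pos fun i hi => ?_
    have : lam i ≠ 0 := (Finset.mem_filter.mp hi).2
    exact (hnn i).lt_of_ne' this
  have hsum_pos : 0 < ∑ T ∈ Finset.powersetCard r' (univ : Finset (Fin m)), ∏ i ∈ T, lam i := by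
    refine lt_of_lt_of_le hFpos ?_
    exact Finset.single_le_sum (f := fun T => ∏ i ∈ T, lam i) (fun T _ => Finset.prod_nonneg fun i _ => hnn i) hFmem
  have hEq := sum_gram_eq_esymm A lam hlam hr'm
  have hne : ∑ S ∈ Finset.powersetCard r' (univ : Finset (Fin m)), gramDet A S ≠ 0 := by
    rw [hEq]; exact hsum_pos.ne'
  obtain ⟨S, hS, hSne⟩ := Finset.exists_ne_zero_of_sum_ne_zero hne
  have hScard : #S = r' := Finset.mem_powersetCard_univ.mp hS
  -- rank chain
  have h1 : IsUnit (rowSub A S * (rowSub A S)ᵀ) :=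
    (Matrix.isUnit_iff_isUnit_det _).mpr (isUnit_iff_ne_zero.mpr hSne)
  have h2 : (rowSub A S * (rowSub A S)ᵀ).rank = r' := by
    rw [Matrix.rank_of_isUnit _ h1, Fintype.card_coe, hScard]
  have h3 : (rowSub A S * (rowSub A S)ᵀ).rank ≤ (rowSub A S).rank :=
    Matrix.rank_mul_le_left _ _
  have h4 : rowSub A S = (Matrix.of fun (a : {x // x ∈ S}) (b : Fin m) =>
      if b = a.1 then (1 : ℝ) else 0) * A := by
    ext a j
    simp [rowSub, Matrix.mul_apply]
  have h5 : (rowSub A S).rank ≤ A.rank := by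
    rw [h4]
    exact Matrix.rank_mul_le_right _ _
  omega

theorem sum_det_spectral_le {m n : ℕ} (A : Matrix (Fin m) (Fin n) ℝ) (k : ℕ)
    (hk1 : 1 ≤ k) (hk2 : k ≤ A.rank) (hkm : k < m) (lam : Fin m → ℝ) (hmono : Antitone lam)
    (hnn : ∀ i, 0 ≤ lam i)
    (hlam : (A * Aᵀ).charpoly = ∏ i, (Polynomial.X - Polynomial.C (lam i))) :
    ∑ S ∈ Finset.powersetCard k (Finset.univ : Finset (Fin m)),
        gramDet A S * specNorm (A - projSpan A S)
      ≤ Real.sqrt (((k : ℝ) + 1) * ((n : ℝ) - (k : ℝ)) * lam ⟨k, hkm⟩) *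
          ∑ S ∈ Finset.powersetCard k (Finset.univ : Finset (Fin m)), gramDet A S := by
  classical
  have hd : ∀ S, 0 ≤ gramDet A S := gramDet_nonneg A
  have hkn : k ≤ n := le_trans hk2 (Matrix.rank_le_width A)
  have hrn : #(univ.filter fun i => lam i ≠ 0) ≤ n :=
    le_trans (support_card_le_rank A lam hnn hlam) (Matrix.rank_le_width A)
  have hex := exchange A k
  have hQE := sum_gram_eq_esymm A lam hlam (j := k + 1) (by omega)
  have hPE := sum_gram_eq_esymm A lam hlam (j := k) (by omega)
  have hstep := esymm_step lam hmono hnn hkm hrn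
  set lk := lam ⟨k, hkm⟩ with hlk
  have hlk0 : 0 ≤ lk := hnn _
  set P := Finset.powersetCard k (Finset.univ : Finset (Fin m)) with hP
  set Q := Finset.powersetCard (k+1) (Finset.univ : Finset (Fin m)) with hQ
  set L := ∑ S ∈ P, gramDet A S * specNorm (A - projSpan A S) with hL
  set E1 := ∑ S ∈ P, gramDet A S with hE1
  have hE10 : 0 ≤ E1 := Finset.sum_nonneg fun S _ => hd S
  have hspec0 : ∀ M : Matrix (Fin m) (Fin n) ℝ, 0 ≤ specNorm M := by
    intro M; unfold specNorm; exact norm_nonneg _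
  have hfrob0 : ∀ M : Matrix (Fin m) (Fin n) ℝ, 0 ≤ frobSq M := by
    intro M; unfold frobSq; positivity
  have hL0 : 0 ≤ L := Finset.sum_nonneg fun S _ => mul_nonneg (hd S) (hspec0 _)
  have hCS : L ^ 2 ≤ E1 * ∑ S ∈ P, gramDet A S * frobSq (A - projSpan A S) := by
    have h := Finset.sum_mul_sq_le_sq_mul_sq P (fun S => Real.sqrt (gramDet A S))
      (fun S => Real.sqrt (gramDet A S) * specNorm (A - projSpan A S))
    have e1 : ∑ S ∈ P, Real.sqrt (gramDet A S) *
        (Real.sqrt (gramDet A S) * specNorm (A - projSpan A S)) = L := by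
      refine Finset.sum_congr rfl fun S _ => ?_
      rw [← mul_assoc, Real.mul_self_sqrt (hd S)]
    have e2 : ∑ S ∈ P, Real.sqrt (gramDet A S) ^ 2 = E1 :=
      Finset.sum_congr rfl fun S _ => Real.sq_sqrt (hd S)
    rw [e1, e2] at h
    refine le_trans h ?_
    refine mul_le_mul_of_nonneg_left ?_ hE10
    refine Finset.sum_le_sum fun S _ => ?_
    rw [mul_pow, Real.sq_sqrt (hd S)]
    refine mul_le_mul_of_nonneg_left ?_ (hd S)
    have hb := specNorm_le_sqrt_frobSq (A - projSpan A S)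
    calc specNorm (A - projSpan A S) ^ 2
        ≤ Real.sqrt (frobSq (A - projSpan A S)) ^ 2 := pow_le_pow_left₀ (hspec0 _) hb 2
      _ = frobSq (A - projSpan A S) := Real.sq_sqrt (hfrob0 _)
  rw [hex] at hCS
  have hcast : ((n - k : ℕ) : ℝ) = (n : ℝ) - (k : ℝ) := by
    rw [Nat.cast_sub hkn]
  have hE2le : ∑ T ∈ Q, gramDet A T ≤ ((n : ℝ) - (k : ℝ)) * lk * E1 := by
    rw [hQE, hPE, ← hcast]
    exact hstep
  set C := ((k : ℝ) + 1) * ((n : ℝ) - (k : ℝ)) * lk with hC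
  have hnk0 : (0 : ℝ) ≤ (n : ℝ) - (k : ℝ) := by
    have : (k : ℝ) ≤ n := by exact_mod_cast hkn
    linarith
  have hC0 : 0 ≤ C := mul_nonneg (mul_nonneg (by positivity) hnk0) hlk0
  have hfinal : L ^ 2 ≤ C * E1 ^ 2 := by
    calc L ^ 2 ≤ E1 * (((k : ℝ) + 1) * ∑ T ∈ Q, gramDet A T) := hCS
      _ ≤ E1 * (((k : ℝ) + 1) * (((n : ℝ) - (k : ℝ)) * lk * E1)) := by
          exact mul_le_mul_of_nonneg_left
            (mul_le_mul_of_nonneg_left hE2le (by positivity)) hE10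
      _ = C * E1 ^ 2 := by rw [hC]; ring
  calc L = Real.sqrt (L ^ 2) := (Real.sqrt_sq hL0).symm
    _ ≤ Real.sqrt (C * E1 ^ 2) := Real.sqrt_le_sqrt hfinal
    _ = Real.sqrt C * E1 := by rw [Real.sqrt_mul hC0, Real.sqrt_sq hE10]
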